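/- Let G be a finite subgroup of GL_2(ℝ) such that the trace and determinant of every element of G are rational numbers. Then G is isomorphic to a cyclic group of order 1, 2, 3, 4, or 6, or to a dihedral group of order 4, 6, 8, or 12. Moreover, if G is isomorphic to a dihedral group of order 4, 8, or 12, then the matrix -I belongs to G. -/

import Mathlib

open Matrix

abbrev M2 := Matrix (Fin 2) (Fin 2) ℝ

lemma entries_of_orth {A : M2} (h : Aᵀ * A = 1) :
    A 0 0 ^ 2 + A 1 0 ^ 2 = 1 ∧ A 0 1 ^ 2 + A 1 1 ^ 2 = 1 ∧
      A 0 0 * A 0 1 + A 1 0 * A 1 1 = 0 := by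
  have h00 := congrFun (congrFun h 0) 0
  have h01 := congrFun (congrFun h 0) 1
  have h11 := congrFun (congrFun h 1) 1
  simp [Matrix.mul_apply, Fin.sum_univ_two, Matrix.one_apply] at h00 h01 h11
  refine ⟨by nlinarith, by nlinarith, by nlinarith⟩

lemma rot_form {A : M2} (h : Aᵀ * A = 1) (hd : A.det = 1) :
    A 1 1 = A 0 0 ∧ A 0 1 = -(A 1 0) ∧ A 0 0 ^ 2 + A 1 0 ^ 2 = 1 := by
  obtain ⟨e1, e2, e3⟩ := entries_of_orth h
  rw [Matrix.det_fin_two] at hd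
  have key : (A 1 1 - A 0 0) ^ 2 + (A 0 1 + A 1 0) ^ 2 = 0 := by nlinarith
  constructor
  · nlinarith [sq_nonneg (A 1 1 - A 0 0), sq_nonneg (A 0 1 + A 1 0)]
  constructor
  · nlinarith [sq_nonneg (A 1 1 - A 0 0), sq_nonneg (A 0 1 + A 1 0)]
  · exact e1

lemma refl_form {A : M2} (h : Aᵀ * A = 1) (hd : A.det = -1) :
    A 1 1 = -(A 0 0) ∧ A 0 1 = A 1 0 ∧ A * A = 1 := by
  obtain ⟨e1, e2, e3⟩ := entries_of_orth h
  rw [Matrix.det_fin_two] at hd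
  have k1 : A 1 1 = -(A 0 0) := by
    nlinarith [sq_nonneg (A 1 1 + A 0 0), sq_nonneg (A 0 1 - A 1 0)]
  have k2 : A 0 1 = A 1 0 := by
    nlinarith [sq_nonneg (A 1 1 + A 0 0), sq_nonneg (A 0 1 - A 1 0)]
  refine ⟨k1, k2, ?_⟩
  ext i j
  fin_cases i <;> fin_cases j <;>
    simp [Matrix.mul_apply, Fin.sum_univ_two, Matrix.one_apply, k1, k2] <;>
    first | linear_combination e1 | ring

lemma invol_eq_neg_one {A : M2} (h : A * A = 1) (hd : A.det = 1) (hne : A ≠ 1) :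
    A = -1 := by
  have h00 := congrFun (congrFun h 0) 0
  have h01 := congrFun (congrFun h 0) 1
  have h10 := congrFun (congrFun h 1) 0
  have h11 := congrFun (congrFun h 1) 1
  rw [Matrix.det_fin_two] at hd
  simp [Matrix.mul_apply, Fin.sum_univ_two, Matrix.one_apply] at h00 h01 h10 h11
  have hs : A 0 0 + A 1 1 ≠ 0 := by intro hsum; nlinarith
  have hb : A 0 1 = 0 := by
    have : A 0 1 * (A 0 0 + A 1 1) = 0 := by ring_nf; ring_nf at h01; linarith
    rcases mul_eq_zero.1 this with h' | h'
    · exact h'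
    · exact absurd h' hs
  have hc : A 1 0 = 0 := by
    have : A 1 0 * (A 0 0 + A 1 1) = 0 := by ring_nf; ring_nf at h10; linarith
    rcases mul_eq_zero.1 this with h' | h'
    · exact h'
    · exact absurd h' hs
  have had : A 1 1 = A 0 0 := by nlinarith
  have ha2 : A 0 0 ^ 2 = 1 := by nlinarith
  have : (A 0 0 - 1) * (A 0 0 + 1) = 0 := by nlinarith
  rcases mul_eq_zero.1 this with h1 | h1
  · exfalso; apply hne; ext i j
    have h1' : A 0 0 = 1 := by linarith
    fin_cases i <;> fin_cases j <;> simp [Matrix.one_apply, h1', hb, hc, had]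
  · have h1' : A 0 0 = -1 := by linarith
    ext i j
    fin_cases i <;> fin_cases j <;> simp [Matrix.one_apply, h1', hb, hc, had]

lemma rot_conj {A B : M2} (hA : Aᵀ * A = 1) (hdA : A.det = 1)
    (hB : Bᵀ * B = 1) (hdB : B.det = -1) : B * A * B = Aᵀ := by
  obtain ⟨a1, a2, a3⟩ := rot_form hA hdA
  obtain ⟨b1, b2, _⟩ := refl_form hB hdB
  obtain ⟨e1, _, _⟩ := entries_of_orth hB
  ext i j
  fin_cases i <;> fin_cases j <;>
    simp [Matrix.mul_apply, Fin.sum_univ_two, Matrix.transpose_apply, a1, a2, b1, b2] <;>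
    first
    | linear_combination A 0 0 * e1
    | linear_combination A 1 0 * e1
    | linear_combination (-(A 1 0)) * e1

/-- Auxiliary integer sequence. -/
def auxSeq (p d : ℤ) : ℕ → ℤ
  | 0 => 0
  | 1 => 1
  | (m+2) => p * auxSeq p d (m+1) - d^2 * auxSeq p d m

lemma den_eq_one_of_seq (q : ℚ) (v : ℕ → ℚ) (h0 : v 0 = 0) (h1 : v 1 = 1)
    (hrec : ∀ m, v (m+2) = q * v (m+1) - v m) (n : ℕ) (hv : v (n+1) = 0) : q.den = 1 := by
  set p : ℤ := q.num with hp
  set d : ℤ := (q.den : ℤ) with hd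
  have hdq : (d : ℚ) * q = (p : ℚ) := by
    rw [hp, hd]
    have hq := Rat.num_div_den q
    have hden : (q.den : ℚ) ≠ 0 := by
      exact_mod_cast q.den_nz
    push_cast
    field_simp [hden]
    exact_mod_cast Rat.den_mul_eq_num q
  have claim : ∀ m, ((auxSeq p d (m+1) : ℚ) = (d:ℚ)^m * v (m+1)) ∧
      ((auxSeq p d (m+2) : ℚ) = (d:ℚ)^(m+1) * v (m+2)) := by
    intro m
    induction m with
    | zero =>
      constructor
      · simp [auxSeq, h1]
      · have e2 : auxSeq p d 2 = p * 1 - d^2 * 0 := by simp [auxSeq]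
        rw [e2, hrec 0, h0, h1]
        push_cast
        linear_combination -hdq
    | succ k ih =>
      refine ⟨ih.2, ?_⟩
      have e3 : auxSeq p d (k+3) = p * auxSeq p d (k+2) - d^2 * auxSeq p d (k+1) := rfl
      rw [e3, hrec (k+1)]
      push_cast
      rw [ih.2, ih.1]
      linear_combination (-((d:ℚ)^(k+1) * v (k+2))) * hdq
  have claim2 : ∀ m, auxSeq p d (m+1) ≡ p^m [ZMOD d] := by
    intro m
    induction m using Nat.twoStepInduction with
    | zero => simp [auxSeq]
    | one => show auxSeq p d 2 ≡ p ^ 1 [ZMOD d]; simp [auxSeq]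
    | more k ih1 ih2 =>
      have e3 : auxSeq p d (k+3) = p * auxSeq p d (k+2) - d^2 * auxSeq p d (k+1) := rfl
      rw [e3]
      have hz : d^2 * auxSeq p d (k+1) ≡ 0 [ZMOD d] :=
        Int.modEq_zero_iff_dvd.2 (Dvd.dvd.mul_right (dvd_pow_self d two_ne_zero) _)
      calc p * auxSeq p d (k+2) - d^2 * auxSeq p d (k+1)
          ≡ p * p^(k+1) - 0 [ZMOD d] := Int.ModEq.sub (Int.ModEq.mul_left p ih2) hz
        _ = p^(k+2) := by ring
  have hz : auxSeq p d (n+1) = 0 := by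
    have := (claim n).1
    rw [hv, mul_zero] at this
    exact_mod_cast this
  have hdvd : d ∣ p^n := by
    have := claim2 n
    rw [hz] at this
    exact Int.modEq_zero_iff_dvd.1 this.symm
  have hdvd' : q.den ∣ p.natAbs ^ n := by
    have h2 := Int.natAbs_dvd_natAbs.mpr hdvd
    rwa [hd, Int.natAbs_natCast, Int.natAbs_pow] at h2
  exact (Nat.Coprime.pow_right n q.reduced.symm).eq_one_of_dvd hdvd'

/-- The pair sequence (u,v) with x^m = u + v x. -/
def uvSeq (q : ℚ) : ℕ → ℚ × ℚ
  | 0 => (1, 0)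
  | (m+1) => (-(uvSeq q m).2, (uvSeq q m).1 + q * (uvSeq q m).2)

lemma uvSeq_v_rec (q : ℚ) (m : ℕ) :
    (uvSeq q (m+2)).2 = q * (uvSeq q (m+1)).2 - (uvSeq q m).2 := by
  show (uvSeq q (m+1)).1 + q * (uvSeq q (m+1)).2 = _
  show -(uvSeq q m).2 + q * (uvSeq q (m+1)).2 = _
  ring

abbrev GL2 := GL (Fin 2) ℝ

lemma m2_neg_one_ne_one : (-1 : M2) ≠ 1 := by
  intro h
  have := congrFun (congrFun h 0) 0
  simp [Matrix.one_apply, Matrix.neg_apply] at this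
  norm_num at this

lemma gl2_neg_one_ne_one : (-1 : GL2) ≠ 1 := by
  intro h
  apply m2_neg_one_ne_one
  have := congrArg Units.val h
  simpa using this

lemma rot_orderOf {x : GL2} (hx : ((x : M2))ᵀ * (x : M2) = 1) (hd : (x : M2).det = 1)
    (htr : ∃ q : ℚ, (x : M2).trace = (q : ℝ)) (hord : 0 < orderOf x) :
    orderOf x ∈ ({1, 2, 3, 4, 6} : Set ℕ) := by
  set A : M2 := (x : M2) with hA
  obtain ⟨a1, a2, a3⟩ := rot_form hx hd
  by_cases hb : A 1 0 = 0
  · -- scalar case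
    have ha2 : A 0 0 ^ 2 = 1 := by rw [hb] at a3; linarith [a3]
    have : (A 0 0 - 1) * (A 0 0 + 1) = 0 := by nlinarith
    rcases mul_eq_zero.1 this with h1 | h1
    · have h1' : A 0 0 = 1 := by linarith
      have hxe : x = 1 := by
        apply Units.ext
        show A = 1
        ext i j
        fin_cases i <;> fin_cases j <;> simp [Matrix.one_apply, h1', a1, a2, hb]
      rw [hxe, orderOf_one]; simp
    · have h1' : A 0 0 = -1 := by linarith
      have hxe : A = -1 := by
        ext i j
        fin_cases i <;> fin_cases j <;> simp [Matrix.one_apply, h1', a1, a2, hb]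
      have hx2 : x ^ 2 = 1 := by
        apply Units.ext
        show (x ^ 2 : GL2).val = 1
        rw [Units.val_pow_eq_pow_val]
        show A ^ 2 = 1
        rw [pow_two, hxe]; ext i j; fin_cases i <;> fin_cases j <;>
          simp [Matrix.mul_apply, Fin.sum_univ_two, Matrix.one_apply]
      have hne : x ≠ 1 := by
        intro h
        have hA1 : A = 1 := by rw [hA, h, Units.val_one]
        rw [hxe] at hA1
        exact m2_neg_one_ne_one hA1
      have := orderOf_eq_prime hx2 hne
      rw [this]; simp
  · obtain ⟨q, hq⟩ := htr
    have hq' : (q : ℝ) = 2 * A 0 0 := by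
      rw [Matrix.trace_fin_two] at hq; rw [← hq, a1]; ring
    have cayley : A * A = (q : ℝ) • A - 1 := by
      ext i j
      fin_cases i <;> fin_cases j <;>
        simp [Matrix.mul_apply, Fin.sum_univ_two, Matrix.one_apply, a1, a2, hq'] <;>
        nlinarith [a3]
    have powers : ∀ m : ℕ, A ^ m =
        (((uvSeq q m).1 : ℝ)) • (1 : M2) + (((uvSeq q m).2 : ℝ)) • A := by
      intro m
      induction m with
      | zero => simp [uvSeq]
      | succ k ih =>
        rw [pow_succ, ih]
        have : ((((uvSeq q k).1 : ℝ)) • (1 : M2) + (((uvSeq q k).2 : ℝ)) • A) * A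
            = (((uvSeq q k).1 : ℝ)) • A + (((uvSeq q k).2 : ℝ)) • (A * A) := by
          rw [add_mul, smul_mul_assoc, smul_mul_assoc, one_mul]
        rw [this, cayley]
        show _ = ((((-(uvSeq q k).2 : ℚ)) : ℝ)) • (1 : M2) +
          ((((uvSeq q k).1 + q * (uvSeq q k).2 : ℚ) : ℝ)) • A
        push_cast
        rw [smul_sub]
        rw [smul_smul]
        module
    obtain ⟨n, hn⟩ : ∃ n, orderOf x = n := ⟨_, rfl⟩
    rw [hn]
    have hordn : 0 < n := hn ▸ hord
    have hxpow : x ^ n = 1 := hn ▸ pow_orderOf_eq_one x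
    have hxn : A ^ n = 1 := by
      rw [hA, ← Units.val_pow_eq_pow_val, hxpow, Units.val_one]
    have hvn : (uvSeq q n).2 = 0 := by
      have := powers n
      rw [hxn] at this
      have h10 := congrFun (congrFun this 1) 0
      simp [Matrix.one_apply] at h10
      rcases h10 with h | h
      · exact_mod_cast h
      · exact absurd h hb
    have hden : q.den = 1 := by
      obtain ⟨m, hm⟩ : ∃ m, n = m + 1 := ⟨n - 1, by omega⟩
      refine den_eq_one_of_seq q (fun m => (uvSeq q m).2) rfl (by simp [uvSeq]) (uvSeq_v_rec q) m ?_
      rw [← hm]; exact hvn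
    have hbound : (q : ℝ) < 2 ∧ -2 < (q : ℝ) := by
      have hb2 : 0 < A 1 0 ^ 2 := by positivity
      constructor <;> nlinarith [a3, sq_nonneg (A 0 0 - 1), sq_nonneg (A 0 0 + 1)]
    have hqint : (q.num : ℚ) = q := (Rat.den_eq_one_iff q).1 hden
    have hnum : q.num = -1 ∨ q.num = 0 ∨ q.num = 1 := by
      have l1 : (q.num : ℝ) < 2 := by rw [show ((q.num : ℝ)) = ((q : ℝ)) by exact_mod_cast congrArg (Rat.cast (K := ℝ)) hqint]; exact hbound.1
      have l2 : (-2 : ℝ) < (q.num : ℝ) := by rw [show ((q.num : ℝ)) = ((q : ℝ)) by exact_mod_cast congrArg (Rat.cast (K := ℝ)) hqint]; exact hbound.2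
      have : q.num < 2 := by exact_mod_cast l1
      have : -2 < q.num := by exact_mod_cast l2
      omega
    -- x is not symmetric so x^2 ≠ 1 etc.
    have hxsq_ne : x ^ 2 ≠ 1 := by
      intro h
      have hAA : A * A = 1 := by
        have := congrArg Units.val h
        rw [Units.val_pow_eq_pow_val, Units.val_one] at this
        rw [← pow_two]; exact this
      -- then A = A⁻¹ = Aᵀ, so A 0 1 = A 1 0, contradiction with a2 and hb
      have hAt : A = Aᵀ := by
        have h1 : Aᵀ * (A * A) = Aᵀ := by rw [hAA, mul_one]
        rw [← mul_assoc, hx, one_mul] at h1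
        exact h1.symm.symm ▸ h1.symm
      have := congrFun (congrFun hAt 0) 1
      rw [Matrix.transpose_apply, a2] at this
      apply hb
      linarith
    have hxne1 : x ≠ 1 := by
      intro h
      apply hxsq_ne
      rw [h, one_pow]
    rcases hnum with h | h | h
    · -- q = -1 : order 3
      have hqv : (q : ℝ) = -1 := by rw [← hqint] at hq ⊢; rw [h]; norm_num
      have hA3 : A ^ 3 = 1 := by
        have : A ^ 3 = (A * A) * A := by rw [pow_succ, pow_two]
        rw [this, cayley, hqv]
        rw [sub_mul, smul_mul_assoc, cayley, hqv, one_mul]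
        module
      have hx3 : x ^ 3 = 1 := by
        apply Units.ext; rw [Units.val_pow_eq_pow_val, Units.val_one]; exact hA3
      have hdvd : n ∣ 3 := hn ▸ orderOf_dvd_of_pow_eq_one hx3
      have hne1 : n ≠ 1 := by
        intro h'
        rw [h', pow_one] at hxpow
        exact hxne1 hxpow
      have hub : n ≤ 3 := Nat.le_of_dvd (by norm_num) hdvd
      interval_cases n <;>
        first
        | (exact absurd rfl hne1)
        | (revert hdvd; norm_num [Set.mem_insert_iff, Set.mem_singleton_iff])
    · -- q = 0 : order 4
      have hqv : (q : ℝ) = 0 := by rw [← hqint, h]; norm_num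
      have hAA : A * A = -1 := by rw [cayley, hqv]; simp
      have hx2 : x ^ 2 = -1 := by
        apply Units.ext
        rw [Units.val_pow_eq_pow_val, Units.val_neg, Units.val_one, pow_two]
        exact hAA
      have hx4 : x ^ 4 = 1 := by
        have h44 : x ^ 4 = (x ^ 2) ^ 2 := by rw [← pow_mul]
        rw [h44, hx2]; simp
      have hdvd : n ∣ 4 := hn ▸ orderOf_dvd_of_pow_eq_one hx4
      have hne2 : n ≠ 2 := by
        intro h'
        rw [h'] at hxpow
        rw [hxpow] at hx2
        exact gl2_neg_one_ne_one hx2.symm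
      have hne1 : n ≠ 1 := by
        intro h'
        rw [h', pow_one] at hxpow
        exact hxne1 hxpow
      have hub : n ≤ 4 := Nat.le_of_dvd (by norm_num) hdvd
      interval_cases n <;>
        first
        | (exact absurd rfl hne1)
        | (exact absurd rfl hne2)
        | (revert hdvd; norm_num [Set.mem_insert_iff, Set.mem_singleton_iff])
    · -- q = 1 : order 6
      have hqv : (q : ℝ) = 1 := by rw [← hqint, h]; norm_num
      have hA3 : A ^ 3 = -1 := by
        have : A ^ 3 = (A * A) * A := by rw [pow_succ, pow_two]
        rw [this, cayley, hqv]
        rw [sub_mul, smul_mul_assoc, cayley, hqv, one_mul]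
        module
      have hx3 : x ^ 3 = -1 := by
        apply Units.ext
        rw [Units.val_pow_eq_pow_val, Units.val_neg, Units.val_one]
        exact hA3
      have hx6 : x ^ 6 = 1 := by
        have h66 : x ^ 6 = (x ^ 3) ^ 2 := by rw [← pow_mul]
        rw [h66, hx3]; simp
      have hdvd : n ∣ 6 := hn ▸ orderOf_dvd_of_pow_eq_one hx6
      have hne1 : n ≠ 1 := by
        intro h'
        rw [h', pow_one] at hxpow
        exact hxne1 hxpow
      have hne2 : n ≠ 2 := by
        intro h'
        rw [h'] at hxpow
        exact hxsq_ne hxpow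
      have hne3 : n ≠ 3 := by
        intro h'
        rw [h'] at hxpow
        rw [hxpow] at hx3
        exact gl2_neg_one_ne_one hx3.symm
      have hub : n ≤ 6 := Nat.le_of_dvd (by norm_num) hdvd
      interval_cases n <;>
        first
        | (exact absurd rfl hne1)
        | (exact absurd rfl hne2)
        | (exact absurd rfl hne3)
        | (revert hdvd; norm_num [Set.mem_insert_iff, Set.mem_singleton_iff])

lemma cyclic_of_rotations (H : Subgroup GL2) (hfin : Finite H)
    (horth : ∀ x ∈ H, ((x : M2))ᵀ * (x : M2) = 1)
    (hdet1 : ∀ x ∈ H, (x : M2).det = 1) : IsCyclic H := by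
  let f : H →* ℂ :=
    { toFun := fun x => (((x : GL2) : M2) 0 0 : ℂ) + (((x : GL2) : M2) 1 0 : ℂ) * Complex.I
      map_one' := by
        have h1 : (((1 : H) : GL2) : M2) = 1 := by simp
        rw [h1]
        simp [Matrix.one_apply]
      map_mul' := by
        intro x y
        obtain ⟨a1, a2, _⟩ := rot_form (horth _ x.2) (hdet1 _ x.2)
        obtain ⟨b1, b2, _⟩ := rot_form (horth _ y.2) (hdet1 _ y.2)
        have hmul : (((x * y : H) : GL2) : M2) = (((x : H) : GL2) : M2) * (((y : H) : GL2) : M2) := by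
          rfl
        rw [hmul]
        apply Complex.ext <;>
          simp [Matrix.mul_apply, Fin.sum_univ_two, a1, a2, b1, b2] <;> ring }
  have hinj : Function.Injective f := by
    intro x y h
    simp only [f, MonoidHom.coe_mk, OneHom.coe_mk] at h
    rw [Complex.ext_iff] at h
    obtain ⟨hre, him⟩ := h
    simp at hre him
    obtain ⟨a1, a2, _⟩ := rot_form (horth _ x.2) (hdet1 _ x.2)
    obtain ⟨b1, b2, _⟩ := rot_form (horth _ y.2) (hdet1 _ y.2)
    apply Subtype.ext
    apply Units.ext
    ext i j
    fin_cases i <;> fin_cases j <;> simp_all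
  exact isCyclic_of_subgroup_isDomain f hinj

lemma card_of_rotations (H : Subgroup GL2) (hfin : Finite H)
    (horth : ∀ x ∈ H, ((x : M2))ᵀ * (x : M2) = 1)
    (hdet1 : ∀ x ∈ H, (x : M2).det = 1)
    (htr : ∀ x ∈ H, ∃ q : ℚ, (x : M2).trace = (q : ℝ)) :
    Nat.card H ∈ ({1, 2, 3, 4, 6} : Set ℕ) := by
  have hc := cyclic_of_rotations H hfin horth hdet1
  obtain ⟨g, hg⟩ := hc.exists_generator
  have h1 : orderOf g = Nat.card H := orderOf_eq_card_of_forall_mem_zpowers hg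
  have h2 : orderOf ((g : GL2)) = orderOf g :=
    orderOf_injective H.subtype Subtype.coe_injective g
  have hord : 0 < orderOf ((g : GL2)) := by
    rw [h2, h1]
    exact Nat.card_pos
  have := rot_orderOf (horth _ g.2) (hdet1 _ g.2) (htr _ g.2) hord
  rwa [h2, h1] at this

lemma det_pm_one (H : Subgroup GL2) (horth : ∀ x ∈ H, ((x : M2))ᵀ * (x : M2) = 1)
    {x : GL2} (hx : x ∈ H) : ((x : M2)).det = 1 ∨ ((x : M2)).det = -1 := by
  have h1 : ((x : M2))ᵀ.det * (x : M2).det = 1 := by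
    rw [← Matrix.det_mul, horth x hx, Matrix.det_one]
  rw [Matrix.det_transpose] at h1
  exact mul_self_eq_one_iff.1 h1

lemma classify (H : Subgroup GL2) (hfin : Finite H)
    (horth : ∀ x ∈ H, ((x : M2))ᵀ * (x : M2) = 1)
    (htr : ∀ x ∈ H, ∃ q : ℚ, (x : M2).trace = (q : ℝ)) :
    (∃ n ∈ ({1, 2, 3, 4, 6} : Set ℕ), Nonempty (H ≃* Multiplicative (ZMod n))) ∨
      (∃ n ∈ ({2, 3, 4, 6} : Set ℕ), Nonempty (H ≃* DihedralGroup n)) := by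
  classical
  by_cases hall : ∀ x ∈ H, ((x : M2)).det = 1
  · left
    have hc := cyclic_of_rotations H hfin horth hall
    exact ⟨Nat.card H, card_of_rotations H hfin horth hall htr,
      ⟨(zmodCyclicMulEquiv hc).symm⟩⟩
  · push_neg at hall
    obtain ⟨s, hsH, hsdet'⟩ := hall
    have hsdet : ((s : M2)).det = -1 := by
      rcases det_pm_one H horth hsH with h | h
      · exact absurd h hsdet'
      · exact h
    -- the rotation subgroup
    set K : Subgroup GL2 := H ⊓ (Matrix.GeneralLinearGroup.det).ker with hK
    have hmemK : ∀ x : GL2, x ∈ K ↔ x ∈ H ∧ ((x : M2)).det = 1 := by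
      intro x
      rw [hK, Subgroup.mem_inf, MonoidHom.mem_ker]
      constructor
      · rintro ⟨h1, h2⟩
        refine ⟨h1, ?_⟩
        have := congrArg Units.val h2
        rwa [Matrix.GeneralLinearGroup.val_det_apply, Units.val_one] at this
      · rintro ⟨h1, h2⟩
        refine ⟨h1, Units.ext ?_⟩
        rwa [Matrix.GeneralLinearGroup.val_det_apply, Units.val_one]
    have hKle : K ≤ H := inf_le_left
    have hfinK : Finite K := Finite.of_injective _ (Subgroup.inclusion_injective hKle)
    have horthK : ∀ x ∈ K, ((x : M2))ᵀ * (x : M2) = 1 := fun x hx => horth x (hKle hx)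
    have hdet1K : ∀ x ∈ K, ((x : M2)).det = 1 := fun x hx => ((hmemK x).1 hx).2
    have htrK : ∀ x ∈ K, ∃ q : ℚ, (x : M2).trace = (q : ℝ) := fun x hx => htr x (hKle hx)
    have hcK := cyclic_of_rotations K hfinK horthK hdet1K
    obtain ⟨g0, hg0⟩ := hcK.exists_generator
    set n := Nat.card K with hn
    have hnmem : n ∈ ({1, 2, 3, 4, 6} : Set ℕ) :=
      card_of_rotations K hfinK horthK hdet1K htrK
    set g : GL2 := (g0 : GL2) with hg
    have hgK : g ∈ K := g0.2
    have hgH : g ∈ H := hKle hgK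
    have hodg : orderOf g = n := by
      have h1 : orderOf g = orderOf g0 := orderOf_injective K.subtype Subtype.coe_injective g0
      rw [h1, orderOf_eq_card_of_forall_mem_zpowers hg0]
    have npos : 0 < n := Nat.card_pos
    -- s is an involution
    have ss : s * s = 1 := by
      apply Units.ext
      exact (refl_form (horth s hsH) hsdet).2.2
    have sgs : s * g * s = g⁻¹ := by
      apply eq_inv_of_mul_eq_one_left
      apply Units.ext
      push_cast [Units.val_mul]
      calc ((s : M2) * (g : M2) * (s : M2)) * (g : M2)
          = ((g : M2))ᵀ * (g : M2) := by
            rw [rot_conj (horth g hgH) (hdet1K g hgK) (horth s hsH) hsdet]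
        _ = 1 := horth g hgH
    -- decomposition of H
    have hdecomp1 : ∀ x ∈ H, ((x : M2)).det = 1 → ∃ k : ℕ, x = g ^ k := by
      intro x hx hdx
      have hxK : x ∈ K := (hmemK x).2 ⟨hx, hdx⟩
      obtain ⟨k, hk⟩ := hg0 ⟨x, hxK⟩
      have hk' : g ^ k = x := by
        have := congrArg (fun z : ↥K => (z : GL2)) hk
        simpa [SubgroupClass.coe_zpow] using this
      refine ⟨(k % (n : ℤ)).toNat, ?_⟩
      have hnn : 0 ≤ k % (n : ℤ) := Int.emod_nonneg k (by exact_mod_cast npos.ne')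
      rw [← hk']
      rw [← zpow_natCast, Int.toNat_of_nonneg hnn, ← hodg, zpow_mod_orderOf]
    have hdecomp : ∀ x ∈ H, (∃ k : ℕ, x = g ^ k) ∨ (∃ k : ℕ, x = s * g ^ k) := by
      intro x hx
      rcases det_pm_one H horth hx with h1 | h1
      · exact Or.inl (hdecomp1 x hx h1)
      · right
        have hsx : s * x ∈ H := mul_mem hsH hx
        have hdsx : (((s * x : GL2) : M2)).det = 1 := by
          rw [Units.val_mul, Matrix.det_mul, hsdet, h1]; norm_num
        obtain ⟨k, hk⟩ := hdecomp1 (s * x) hsx hdsx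
        refine ⟨k, ?_⟩
        rw [← hk, ← mul_assoc, ss, one_mul]
    by_cases hn1 : n = 1
    · -- H = {1, s}, cyclic of order 2
      left
      have hg1 : g = 1 := by
        have h := pow_orderOf_eq_one g
        rw [hodg, hn1, pow_one] at h
        exact h
      have hgen : ∀ y : H, y ∈ Subgroup.zpowers (⟨s, hsH⟩ : H) := by
        intro y
        rcases hdecomp y y.2 with ⟨k, hk⟩ | ⟨k, hk⟩
        · refine ⟨0, ?_⟩
          apply Subtype.ext
          simp [hk, hg1]
        · refine ⟨1, ?_⟩
          apply Subtype.ext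
          simp [hk, hg1]
      have hcH : IsCyclic H := ⟨⟨_, hgen⟩⟩
      have hsne : (⟨s, hsH⟩ : H) ≠ 1 := by
        intro h
        have : (s : M2) = 1 := by
          have := congrArg (fun z : ↥H => ((z : GL2) : M2)) h
          simpa using this
        rw [this, Matrix.det_one] at hsdet
        norm_num at hsdet
      have hs2 : (⟨s, hsH⟩ : H) ^ 2 = 1 := by
        apply Subtype.ext
        rw [pow_two]
        exact ss
      have hcard : Nat.card H = 2 := by
        rw [← orderOf_eq_card_of_forall_mem_zpowers hgen]
        exact orderOf_eq_prime hs2 hsne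
      exact ⟨Nat.card H, by rw [hcard]; norm_num, ⟨(zmodCyclicMulEquiv hcH).symm⟩⟩
    · -- dihedral case
      right
      have hn2 : 2 ≤ n := by omega
      haveI : NeZero n := ⟨by omega⟩
      set gH : ↥H := ⟨g, hgH⟩ with hgHdef
      set sH : ↥H := ⟨s, hsH⟩ with hsHdef
      have hordgH : orderOf gH = n := by
        have h1 : orderOf g = orderOf gH := orderOf_injective H.subtype Subtype.coe_injective gH
        rw [← h1, hodg]
      have hmod : ∀ m : ℕ, gH ^ (m % n) = gH ^ m := by
        intro m
        conv_lhs => rw [← hordgH]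
        exact pow_mod_orderOf gH m
      have hpw : ∀ i j : ZMod n, gH ^ (i + j).val = gH ^ i.val * gH ^ j.val := by
        intro i j
        rw [← pow_add, ZMod.val_add, hmod]
      have hsH2 : sH * sH = 1 := Subtype.ext ss
      have hsHinv : sH⁻¹ = sH := inv_eq_of_mul_eq_one_right hsH2
      have hsgs : sH * gH * sH = gH⁻¹ := Subtype.ext sgs
      have hconj : ∀ k : ℕ, sH * gH ^ k * sH = (gH ^ k)⁻¹ := by
        intro k
        have h1 : (MulAut.conj sH) (gH ^ k) = ((MulAut.conj sH) gH) ^ k := map_pow _ _ _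
        simp only [MulAut.conj_apply, hsHinv] at h1
        rw [h1, hsgs, inv_pow]
      have hswap : ∀ k : ℕ, gH ^ k * sH = sH * (gH ^ k)⁻¹ := by
        intro k
        calc gH ^ k * sH = (sH * sH) * (gH ^ k * sH) := by rw [hsH2, one_mul]
          _ = sH * (sH * gH ^ k * sH) := by rw [mul_assoc, mul_assoc]
          _ = sH * (gH ^ k)⁻¹ := by rw [hconj]
      have hneg : ∀ i : ZMod n, gH ^ (-i).val = (gH ^ i.val)⁻¹ := by
        intro i
        have h1 : gH ^ ((-i) + i).val = gH ^ (-i).val * gH ^ i.val := hpw _ _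
        rw [neg_add_cancel, ZMod.val_zero, pow_zero] at h1
        exact eq_inv_of_mul_eq_one_left h1.symm
      let Ffun : DihedralGroup n → ↥H := fun t =>
        match t with
        | DihedralGroup.r i => gH ^ i.val
        | DihedralGroup.sr i => sH * gH ^ i.val
      have hmul : ∀ t1 t2 : DihedralGroup n, Ffun (t1 * t2) = Ffun t1 * Ffun t2 := by
        rintro (i | i) (j | j)
        · show gH ^ (i + j).val = gH ^ i.val * gH ^ j.val
          exact hpw i j
        · show sH * gH ^ (j - i).val = gH ^ i.val * (sH * gH ^ j.val)
          rw [← mul_assoc, hswap, mul_assoc, ← hneg, ← hpw, neg_add_eq_sub]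
        · show sH * gH ^ (i + j).val = (sH * gH ^ i.val) * gH ^ j.val
          rw [hpw, mul_assoc]
        · show gH ^ (j - i).val = (sH * gH ^ i.val) * (sH * gH ^ j.val)
          rw [mul_assoc, ← mul_assoc (gH ^ i.val), hswap, ← mul_assoc, ← mul_assoc, hsH2,
            one_mul, ← hneg, ← hpw, neg_add_eq_sub]
      let F : DihedralGroup n →* ↥H :=
        { toFun := Ffun
          map_one' := by
            show gH ^ (0 : ZMod n).val = 1
            rw [ZMod.val_zero, pow_zero]
          map_mul' := hmul }
      have hdet_r : ∀ k : ℕ, (((gH ^ k : ↥H) : GL2) : M2).det = 1 := by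
        intro k
        rw [SubgroupClass.coe_pow]
        show ((g ^ k : GL2) : M2).det = 1
        rw [Units.val_pow_eq_pow_val, Matrix.det_pow, hdet1K g hgK, one_pow]
      have hdet_sr : ∀ k : ℕ, (((sH * gH ^ k : ↥H) : GL2) : M2).det = -1 := by
        intro k
        have h1 : ((sH * gH ^ k : ↥H) : GL2) = s * ((gH ^ k : ↥H) : GL2) := rfl
        rw [h1, Units.val_mul, Matrix.det_mul, hsdet, hdet_r k]
        norm_num
      have hrinj : ∀ i j : ZMod n, gH ^ i.val = gH ^ j.val → i = j := by
        intro i j h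
        have h1 := pow_eq_pow_iff_modEq.1 h
        rw [hordgH] at h1
        have h2 : i.val = j.val := by
          have h3 : i.val % n = j.val % n := h1
          rwa [Nat.mod_eq_of_lt (ZMod.val_lt i), Nat.mod_eq_of_lt (ZMod.val_lt j)] at h3
        exact ZMod.val_injective n h2
      have hinj : Function.Injective F := by
        rintro (i | i) (j | j) h
        · exact congrArg DihedralGroup.r (hrinj i j h)
        · exfalso
          have h' : gH ^ i.val = sH * gH ^ j.val := h
          have hd := congrArg (fun z : ↥H => ((z : GL2) : M2).det) h'
          rw [hdet_r, hdet_sr] at hd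
          norm_num at hd
        · exfalso
          have h' : sH * gH ^ i.val = gH ^ j.val := h
          have hd := congrArg (fun z : ↥H => ((z : GL2) : M2).det) h'
          rw [hdet_sr, hdet_r] at hd
          norm_num at hd
        · have h' : sH * gH ^ i.val = sH * gH ^ j.val := h
          have h2 : gH ^ i.val = gH ^ j.val := mul_left_cancel h'
          exact congrArg DihedralGroup.sr (hrinj i j h2)
      have hsurj : Function.Surjective F := by
        intro y
        rcases hdecomp y y.2 with ⟨k, hk⟩ | ⟨k, hk⟩
        · refine ⟨DihedralGroup.r (k : ZMod n), ?_⟩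
          show gH ^ ((k : ZMod n)).val = y
          apply Subtype.ext
          rw [ZMod.val_natCast, ← hordgH, pow_mod_orderOf, SubgroupClass.coe_pow]
          exact hk.symm
        · refine ⟨DihedralGroup.sr (k : ZMod n), ?_⟩
          show sH * gH ^ ((k : ZMod n)).val = y
          apply Subtype.ext
          rw [ZMod.val_natCast, ← hordgH, pow_mod_orderOf]
          show s * ((gH ^ k : ↥H) : GL2) = (y : GL2)
          rw [SubgroupClass.coe_pow]
          exact hk.symm
      have hmemD : n ∈ ({2, 3, 4, 6} : Set ℕ) := by
        simp only [Set.mem_insert_iff, Set.mem_singleton_iff] at hnmem ⊢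
        omega
      exact ⟨n, hmemD, ⟨(MulEquiv.ofBijective F ⟨hinj, hsurj⟩).symm⟩⟩

lemma real_conjT (A : M2) : Aᴴ = Aᵀ := by
  ext i j
  simp [Matrix.conjTranspose_apply]

lemma conj_orth (G : Subgroup GL2) (hG : Finite G) :
    ∃ H : Subgroup GL2, Nonempty (G ≃* H) ∧ Finite H ∧
      (∀ x ∈ H, ((x : M2))ᵀ * (x : M2) = 1) ∧
      (∀ x ∈ H, ∃ y ∈ G, (x : M2).trace = ((y : GL2) : M2).trace) := by
  classical
  haveI := hG
  haveI : Fintype G := Fintype.ofFinite _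
  set f : ↥G → M2 := fun x => (((x : GL2) : M2))ᴴ * ((x : GL2) : M2) with hf
  set S : M2 := ∑ x : ↥G, f x with hS
  have hf1 : f 1 = 1 := by
    rw [hf]
    simp
  have hfpsd : ∀ x : ↥G, (f x).PosSemidef := fun x =>
    Matrix.posSemidef_conjTranspose_mul_self _
  have hSpd : S.PosDef := by
    have hsplit : S = f 1 + ∑ x ∈ Finset.univ.erase 1, f x :=
      (Finset.add_sum_erase _ f (Finset.mem_univ 1)).symm
    rw [hsplit, hf1]
    refine Matrix.PosDef.add_posSemidef Matrix.PosDef.one ?_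
    refine Finset.sum_induction f _ (fun a b ha hb => ha.add hb) Matrix.PosSemidef.zero ?_
    intro x _
    exact hfpsd x
  have hinv : ∀ y : ↥G, (((y : GL2) : M2))ᴴ * S * ((y : GL2) : M2) = S := by
    intro y
    have h1 : (((y : GL2) : M2))ᴴ * S * ((y : GL2) : M2) = ∑ x : ↥G, f (x * y) := by
      rw [hS, Finset.mul_sum, Finset.sum_mul]
      apply Finset.sum_congr rfl
      intro x _
      have hc : (((x * y : ↥G) : GL2) : M2) = (((x : GL2) : M2)) * (((y : GL2) : M2)) := rfl
      rw [hf]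
      simp only [hc, Matrix.conjTranspose_mul]
      simp only [Matrix.mul_assoc]
    rw [h1]
    exact Fintype.sum_equiv (Equiv.mulRight y) _ _ (fun x => rfl)
  set Q : M2 := (open scoped MatrixOrder in CFC.sqrt S) with hQ
  have hQpsd : Q.PosSemidef := (open scoped MatrixOrder in Matrix.nonneg_iff_posSemidef.1 (CFC.sqrt_nonneg S))
  have hQQ : Q * Q = S := (open scoped MatrixOrder in CFC.sqrt_mul_sqrt_self S hSpd.posSemidef.nonneg)
  have hQt : Qᵀ = Q := by
    rw [← real_conjT Q]
    exact hQpsd.1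
  have hdetQ : Q.det ≠ 0 := by
    intro h0
    have h1 : S.det = 0 := by
      rw [← hQQ, Matrix.det_mul, h0, mul_zero]
    exact absurd h1 (ne_of_gt hSpd.det_pos)
  have hQu : IsUnit Q.det := isUnit_iff_ne_zero.2 hdetQ
  set q : GL2 := Matrix.GeneralLinearGroup.mkOfDetNeZero Q hdetQ with hq
  have hqval : ((q : GL2) : M2) = Q := rfl
  have hqinv : (((q⁻¹ : GL2)) : M2) = Q⁻¹ := by
    rw [← hqval]
    exact Matrix.coe_units_inv q
  have hinvt : (Q⁻¹)ᵀ = Q⁻¹ := by rw [Matrix.transpose_nonsing_inv, hQt]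
  refine ⟨Subgroup.map (MulAut.conj q).toMonoidHom G,
    ⟨MulEquiv.subgroupMap (MulAut.conj q) G⟩, ?_, ?_, ?_⟩
  · exact Finite.of_equiv _ (MulEquiv.subgroupMap (MulAut.conj q) G).toEquiv
  · intro x hx
    obtain ⟨y, hyG, hyx⟩ := Subgroup.mem_map.1 hx
    have hyx' : q * y * q⁻¹ = x := hyx
    have hX : (x : M2) = Q * ((y : GL2) : M2) * Q⁻¹ := by
      rw [← hyx']
      show (((q * y * q⁻¹ : GL2)) : M2) = _
      rw [Units.val_mul, Units.val_mul, hqval, hqinv]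
    set Yv : M2 := ((y : GL2) : M2) with hYv
    have hYS : Yvᵀ * S * Yv = S := by
      have h2 := hinv ⟨y, hyG⟩
      rwa [real_conjT] at h2
    rw [hX]
    calc (Q * Yv * Q⁻¹)ᵀ * (Q * Yv * Q⁻¹)
        = Q⁻¹ * Yvᵀ * (Q * Q) * Yv * Q⁻¹ := by
          rw [Matrix.transpose_mul, Matrix.transpose_mul, hinvt, hQt]
          simp only [Matrix.mul_assoc]
      _ = Q⁻¹ * Yvᵀ * S * Yv * Q⁻¹ := by rw [hQQ]
      _ = Q⁻¹ * (Yvᵀ * S * Yv) * Q⁻¹ := by simp only [Matrix.mul_assoc]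
      _ = Q⁻¹ * S * Q⁻¹ := by rw [hYS]
      _ = Q⁻¹ * (Q * Q) * Q⁻¹ := by rw [hQQ]
      _ = (Q⁻¹ * Q) * (Q * Q⁻¹) := by simp only [Matrix.mul_assoc]
      _ = 1 := by rw [Matrix.nonsing_inv_mul Q hQu, Matrix.mul_nonsing_inv Q hQu, one_mul]
  · intro x hx
    obtain ⟨y, hyG, hyx⟩ := Subgroup.mem_map.1 hx
    have hyx' : q * y * q⁻¹ = x := hyx
    refine ⟨y, hyG, ?_⟩
    have hX : (x : M2) = Q * ((y : GL2) : M2) * Q⁻¹ := by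
      rw [← hyx']
      show (((q * y * q⁻¹ : GL2)) : M2) = _
      rw [Units.val_mul, Units.val_mul, hqval, hqinv]
    rw [hX, Matrix.trace_mul_comm (Q * ((y : GL2) : M2)) Q⁻¹, ← Matrix.mul_assoc,
      Matrix.nonsing_inv_mul Q hQu, one_mul]

lemma real_pow_eq_one {r : ℝ} {m : ℕ} (hm : 0 < m) (h : r ^ m = 1) : r = 1 ∨ r = -1 := by
  have h1 : |r| ^ m = 1 := by rw [← abs_pow, h, abs_one]
  have h2 : |r| = 1 := by
    by_contra hne
    rcases lt_or_gt_of_ne hne with hlt | hgt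
    · have := pow_lt_one₀ (abs_nonneg r) hlt hm.ne'
      rw [h1] at this
      exact lt_irrefl 1 this
    · have := one_lt_pow₀ hgt hm.ne'
      rw [h1] at this
      exact lt_irrefl 1 this
  exact (abs_eq (by norm_num)).1 h2

/-- Let `G` be a finite subgroup of `GL₂(ℝ)` such that the trace and determinant
of every element of `G` are rational.  Then `G` is isomorphic to a cyclic group of order
`1, 2, 3, 4` or `6`, or to a dihedral group of order `4, 6, 8` or `12` (i.e. `DihedralGroup n`
with `n ∈ {2, 3, 4, 6}`, where `DihedralGroup 2` is the Klein four group).  Moreover, if `G` is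
isomorphic to a dihedral group of order `4, 8` or `12`, then `-I ∈ G`. -/
theorem finite_subgroup_GL2R_classification
    (G : Subgroup (Matrix.GeneralLinearGroup (Fin 2) ℝ)) (hG : Finite G)
    (htr : ∀ x ∈ G, ∃ q : ℚ, Matrix.trace (x : Matrix (Fin 2) (Fin 2) ℝ) = (q : ℝ))
    (hdet : ∀ x ∈ G, ∃ q : ℚ, (x : Matrix (Fin 2) (Fin 2) ℝ).det = (q : ℝ)) :
    ((∃ n ∈ ({1, 2, 3, 4, 6} : Set ℕ), Nonempty (G ≃* Multiplicative (ZMod n))) ∨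
      (∃ n ∈ ({2, 3, 4, 6} : Set ℕ), Nonempty (G ≃* DihedralGroup n))) ∧
    (∀ n ∈ ({2, 4, 6} : Set ℕ), Nonempty (G ≃* DihedralGroup n) →
      (-1 : Matrix.GeneralLinearGroup (Fin 2) ℝ) ∈ G) := by
  classical
  haveI := hG
  constructor
  · obtain ⟨Hc, ⟨e⟩, hfinH, horthH, htrH⟩ := conj_orth G hG
    have htrH' : ∀ x ∈ Hc, ∃ q : ℚ, ((x : GL2) : M2).trace = (q : ℝ) := by
      intro x hx
      obtain ⟨y, hyG, hyt⟩ := htrH x hx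
      obtain ⟨qq, hq⟩ := htr y hyG
      exact ⟨qq, by rw [hyt, hq]⟩
    rcases classify Hc hfinH horthH htrH' with ⟨n, hmem, ⟨e2⟩⟩ | ⟨n, hmem, ⟨e2⟩⟩
    · exact Or.inl ⟨n, hmem, ⟨e.trans e2⟩⟩
    · exact Or.inr ⟨n, hmem, ⟨e.trans e2⟩⟩
  · rintro n hn ⟨ψ⟩
    set D : ↥G →* ℝˣ := (Matrix.GeneralLinearGroup.det).comp G.subtype with hD
    have hDval : ∀ z : ↥G, (D z).val = ((z : GL2) : M2).det := by
      intro z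
      rw [hD]
      simp [Matrix.GeneralLinearGroup.val_det_apply]
    have hpm : ∀ z : ↥G, D z = 1 ∨ D z = -1 := by
      intro z
      have hoz : 0 < orderOf z := orderOf_pos z
      have h1 : (D z) ^ orderOf z = 1 := by
        rw [← map_pow, pow_orderOf_eq_one, _root_.map_one]
      have h2 : ((D z).val) ^ orderOf z = 1 := by
        rw [← Units.val_pow_eq_pow_val, h1, Units.val_one]
      rcases real_pow_eq_one hoz h2 with h3 | h3
      · exact Or.inl (Units.ext h3)
      · exact Or.inr (Units.ext (by rw [h3]; rfl))
    have key : ∀ v : ↥G, v * v = 1 → v ≠ 1 → D v = 1 →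
        (-1 : Matrix.GeneralLinearGroup (Fin 2) ℝ) ∈ G := by
      intro v hv2 hvne hvdet
      set w : GL2 := (v : GL2) with hw
      have hwG : w ∈ G := v.2
      set A : M2 := (w : M2) with hA
      have hAA : A * A = 1 := by
        have h1 : w * w = 1 := by
          have := congrArg (fun t : ↥G => (t : GL2)) hv2
          simpa using this
        have h2 := congrArg Units.val h1
        rwa [Units.val_mul, Units.val_one] at h2
      have hAdet : A.det = 1 := by
        have := congrArg Units.val hvdet
        rw [hDval, Units.val_one] at this
        exact this
      have hAne : A ≠ 1 := by
        intro h
        exact hvne (Subtype.ext (Units.ext h))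
      have hAneg : A = -1 := invol_eq_neg_one hAA hAdet hAne
      have hwneg : w = -1 := by
        apply Units.ext
        rw [Units.val_neg, Units.val_one]
        rw [hA] at hAneg
        exact hAneg
      rw [← hwneg]
      exact hwG
    have hn' : n = 2 ∨ n = 4 ∨ n = 6 := by
      simpa [Set.mem_insert_iff, Set.mem_singleton_iff] using hn
    have hn2 : 2 ≤ n := by omega
    haveI : NeZero n := ⟨by omega⟩
    set h : ZMod n := ((n / 2 : ℕ) : ZMod n) with hh
    have hhne : h ≠ 0 := by
      intro h0
      have hval : h.val = n / 2 := by
        rw [hh, ZMod.val_natCast, Nat.mod_eq_of_lt (by omega)]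
      rw [h0, ZMod.val_zero] at hval
      omega
    have hhh : h + h = 0 := by
      rw [hh, ← Nat.cast_add]
      have : n / 2 + n / 2 = n := by omega
      rw [this, ZMod.natCast_self]
    set a : ↥G := ψ.symm (DihedralGroup.r h) with ha
    set b : ↥G := ψ.symm (DihedralGroup.sr 0) with hb
    set c : ↥G := ψ.symm (DihedralGroup.sr h) with hc
    have ha2 : a * a = 1 := by
      rw [ha, ← _root_.map_mul, DihedralGroup.r_mul_r, hhh, ← DihedralGroup.one_def, _root_.map_one]
    have hane : a ≠ 1 := by
      intro h1
      rw [ha] at h1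
      have h2 : DihedralGroup.r h = (1 : DihedralGroup n) := by
        have := congrArg ψ h1
        rwa [MulEquiv.apply_symm_apply, _root_.map_one] at this
      rw [DihedralGroup.one_def] at h2
      exact hhne (DihedralGroup.r.injEq _ _ ▸ h2)
    have hb2 : b * b = 1 := by
      rw [hb, ← _root_.map_mul, DihedralGroup.sr_mul_sr, sub_self, ← DihedralGroup.one_def,
        _root_.map_one]
    have hbne : b ≠ 1 := by
      intro h1
      rw [hb] at h1
      have h2 : DihedralGroup.sr (0 : ZMod n) = (1 : DihedralGroup n) := by
        have := congrArg ψ h1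
        rwa [MulEquiv.apply_symm_apply, _root_.map_one] at this
      rw [DihedralGroup.one_def] at h2
      cases h2
    have hc2 : c * c = 1 := by
      rw [hc, ← _root_.map_mul, DihedralGroup.sr_mul_sr, sub_self, ← DihedralGroup.one_def,
        _root_.map_one]
    have hcne : c ≠ 1 := by
      intro h1
      rw [hc] at h1
      have h2 : DihedralGroup.sr h = (1 : DihedralGroup n) := by
        have := congrArg ψ h1
        rwa [MulEquiv.apply_symm_apply, _root_.map_one] at this
      rw [DihedralGroup.one_def] at h2
      cases h2
    have hba : b * a = c := by
      rw [ha, hb, hc, ← _root_.map_mul, DihedralGroup.sr_mul_r, zero_add]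
    rcases hpm a with hda | hda
    · exact key a ha2 hane hda
    · rcases hpm b with hdb | hdb
      · exact key b hb2 hbne hdb
      · have hdc : D c = 1 := by
          rw [← hba, _root_.map_mul, hda, hdb]
          simp
        exact key c hc2 hcne hdc
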